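/- Let U be unitary on a finite-dimensional Hilbert space, P an orthogonal projection, E = PUP on ran(P). Then for any eigenvalue λ of E with |λ| = 1 and any m ≥ 1, ker(λ - E)^m = ker(λ - E); that is, unimodular eigenvalues of E have no nontrivial Jordan blocks. -/

import Mathlib

open scoped InnerProductSpace

/-- Let `U` be unitary on a finite-dimensional complex Hilbert space, `P` an orthogonal
projection, and `E = P U P`. Unimodular eigenvalues of `E` have no nontrivial Jordan
blocks: for `‖l‖ = 1` and `m ≥ 1`, `ker (l - E)^m = ker (l - E)`. -/
theorem no_jordan_block_for_unimodular_eigenvalue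
    {H : Type*} [NormedAddCommGroup H] [InnerProductSpace ℂ H] [FiniteDimensional ℂ H]
    (U P : H →ₗ[ℂ] H)
    (hU : ∀ x y : H, ⟪U x, U y⟫_ℂ = ⟪x, y⟫_ℂ) (hUsurj : Function.Surjective U)
    (hP : P ∘ₗ P = P) (hPsa : ∀ x y : H, ⟪P x, y⟫_ℂ = ⟪x, P y⟫_ℂ)
    (l : ℂ) (hl : ‖l‖ = 1) (m : ℕ) (hm : 1 ≤ m) :
    LinearMap.ker ((l • (1 : H →ₗ[ℂ] H) - (P ∘ₗ U ∘ₗ P)) ^ m)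
      = LinearMap.ker (l • (1 : H →ₗ[ℂ] H) - (P ∘ₗ U ∘ₗ P)) := by
  set E : H →ₗ[ℂ] H := P ∘ₗ U ∘ₗ P with hE
  set A : H →ₗ[ℂ] H := l • (1 : H →ₗ[ℂ] H) - E with hA
  have hPP : ∀ z : H, P (P z) = P z := by
    intro z
    have := congrArg (fun f : H →ₗ[ℂ] H => f z) hP
    simpa using this
  have hconj : (starRingEnd ℂ) l * l = 1 := by
    have h1 : l * (starRingEnd ℂ) l = (Complex.normSq l : ℂ) := Complex.mul_conj l
    have h2 : Complex.normSq l = 1 := by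
      have : ‖l‖ = 1 := hl
      rw [Complex.normSq_eq_norm_sq, this]; norm_num
    rw [mul_comm] at h1
    rw [h1, h2]; norm_num
  have hlne : l ≠ 0 := by
    intro h; rw [h] at hl; simp at hl
  have hEapp : ∀ z : H, E z = P (U (P z)) := by
    intro z; simp [hE, LinearMap.comp_apply]
  -- fixed points of P from equal self-inner-products
  have hPfix : ∀ w : H, ⟪P w, P w⟫_ℂ = ⟪w, w⟫_ℂ → P w = w := by
    intro w hw
    have e1 : ⟪P w, P w⟫_ℂ = ⟪w, P w⟫_ℂ := by
      rw [hPsa w (P w), hPP]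
    have e2 : ⟪P w, w⟫_ℂ = ⟪w, P w⟫_ℂ := hPsa w w
    have e3 : ⟪w, P w⟫_ℂ = ⟪w, w⟫_ℂ := e1.symm.trans hw
    have h0 : ⟪w - P w, w - P w⟫_ℂ = 0 := by
      rw [inner_sub_sub_self, e2, e3, hw]
      ring
    have := inner_self_eq_zero.mp h0
    exact (sub_eq_zero.mp this).symm
  -- key step: ker A² ⊆ ker A
  have key : ∀ x : H, A (A x) = 0 → A x = 0 := by
    intro x hx
    set y : H := A x with hy
    have hEy : E y = l • y := by
      have h1 : l • y - E y = 0 := by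
        have := hx
        simpa [hA, LinearMap.sub_apply, LinearMap.smul_apply] using this
      have := sub_eq_zero.mp h1
      exact this.symm
    -- P y = y
    have hPy : P y = y := by
      have h1 : P (E y) = E y := by rw [hEapp, hPP]
      rw [hEy] at h1
      have h2 : l • P y = l • y := by simpa using h1
      exact smul_right_injective H hlne h2
    -- U y = l • y
    have hUy : U y = l • y := by
      have hw : ⟪P (U y), P (U y)⟫_ℂ = ⟪U y, U y⟫_ℂ := by
        have hPUy : P (U y) = l • y := by
          have := hEy
          rw [hEapp, hPy] at this
          exact this
        rw [hPUy, hU y y, inner_smul_left, inner_smul_right, ← mul_assoc, hconj,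
          one_mul]
      have hPUy : P (U y) = U y := hPfix (U y) hw
      have h3 : E y = P (U y) := by rw [hEapp, hPy]
      rw [← hPUy, ← h3, hEy]
    -- ⟪y, y⟫ = 0
    have hyPx : ⟪y, P x⟫_ℂ = ⟪y, x⟫_ℂ := by
      rw [← hPsa y x, hPy]
    have hyUPx : ⟪y, U (P x)⟫_ℂ = l * ⟪y, x⟫_ℂ := by
      have h1 : ⟪U y, U (P x)⟫_ℂ = ⟪y, x⟫_ℂ := by rw [hU, hyPx]
      rw [hUy, inner_smul_left] at h1
      have h2 : l * ((starRingEnd ℂ) l * ⟪y, U (P x)⟫_ℂ) = l * ⟪y, x⟫_ℂ := by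
        rw [h1]
      rwa [← mul_assoc, mul_comm l, hconj, one_mul] at h2
    have hself : ⟪y, y⟫_ℂ = 0 := by
      have : ⟪y, y⟫_ℂ = ⟪y, l • x - E x⟫_ℂ := by
        congr 1
      rw [this, inner_sub_right, inner_smul_right, hEapp, ← hPsa y (U (P x)), hPy,
        hyUPx]
      ring
    exact inner_self_eq_zero.mp hself
  -- deduce equality of kernels for all m ≥ 1 by induction
  induction m, hm using Nat.le_induction with
  | base => rw [pow_one]
  | succ n hn ihn =>
      apply le_antisymm
      · intro x hx
        have hx' : (A ^ n) (A x) = 0 := by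
          have := LinearMap.mem_ker.mp hx
          rw [pow_succ] at this
          simpa [Module.End.mul_apply] using this
        have hAx : A x ∈ LinearMap.ker (A ^ n) := LinearMap.mem_ker.mpr hx'
        rw [ihn] at hAx
        have : A (A x) = 0 := LinearMap.mem_ker.mp hAx
        exact LinearMap.mem_ker.mpr (key x this)
      · intro x hx
        have hx' : A x = 0 := LinearMap.mem_ker.mp hx
        apply LinearMap.mem_ker.mpr
        rw [pow_succ]
        simp [Module.End.mul_apply, hx']
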